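/- arXiv:2209.01093 — 6 statements merged into one kernel-verified Lean document; each statement's English description precedes it below -/
import Mathlib

section
/- Let G be a finite simple graph that is connected, and let H ∈ IIM_1(G) be connected. Then diam(H) ≤ max{diam(G), 5}. -/
/-- Vertex type after `l` IIM steps starting from vertex type `V`:
at each step every existing vertex gets one new copy. -/
def IterV (V : Type) : ℕ → Type
  | 0 => V
  | l + 1 => IterV V l ⊕ IterV V l

instance iterVFintype {V : Type} [Fintype V] : ∀ l, Fintype (IterV V l)
  | 0 => inferInstanceAs (Fintype V)
  | l + 1 =>
    letI := iterVFintype (V := V) l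
    inferInstanceAs (Fintype (IterV V l ⊕ IterV V l))

instance iterVNonempty {V : Type} [Nonempty V] : ∀ l, Nonempty (IterV V l)
  | 0 => inferInstanceAs (Nonempty V)
  | l + 1 =>
    letI := iterVNonempty (V := V) l
    inferInstanceAs (Nonempty (IterV V l ⊕ IterV V l))

/-- One IIM step: each vertex `v` of `G` gets a new copy (`Sum.inr v`), which is a
clone of `v` (joined to the closed neighborhood of `v`) if `σ v = true`, and an
anticlone of `v` (joined to the complement of the closed neighborhood) if `σ v = false`.
Old vertices (`Sum.inl`) keep the edges of `G`; new vertices form an independent set. -/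
def iimStep {V : Type} (G : SimpleGraph V) (σ : V → Bool) : SimpleGraph (V ⊕ V) where
  Adj x y :=
    match x, y with
    | Sum.inl u, Sum.inl v => G.Adj u v
    | Sum.inl u, Sum.inr v =>
        if σ v = true then u = v ∨ G.Adj u v else ¬(u = v ∨ G.Adj u v)
    | Sum.inr u, Sum.inl v =>
        if σ u = true then v = u ∨ G.Adj v u else ¬(v = u ∨ G.Adj v u)
    | Sum.inr _, Sum.inr _ => False
  symm := by
    constructor
    rintro (u | u) (v | v) h
    · exact G.adj_symm h
    · exact h
    · exact h
    · exact h
  loopless := by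
    constructor
    rintro (u | u) h
    · exact G.irrefl h
    · exact h

/-- The IIM graph after `l` steps starting from `G`, where `σ i` records, for each
vertex existing after `i` steps, whether its copy created at step `i+1` is a clone
(`true`) or an anticlone (`false`).  `IIM_l(G)` is exactly the set of graphs of the
form `iimGraph G σ l` as `σ` varies. -/
def iimGraph {V : Type} (G : SimpleGraph V) (σ : ∀ i, IterV V i → Bool) :
    ∀ l, SimpleGraph (IterV V l)
  | 0 => G
  | l + 1 => iimStep (iimGraph G σ l) (σ l)

/-- The level (creation step) of a vertex of an IIM graph. -/
def levelOf {V : Type} : ∀ l, IterV V l → ℕ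
  | 0, _ => 0
  | l + 1, Sum.inl x => levelOf l x
  | l + 1, Sum.inr _ => l + 1

/-- The (level-0) vertex `x` of the initial graph, viewed as a vertex of the IIM graph
after `l` steps. -/
def liftV {V : Type} (x : V) : ∀ l, IterV V l
  | 0 => x
  | l + 1 => Sum.inl (liftV x l)

section IIMAux

open SimpleGraph Sum

variable {V : Type} {G : SimpleGraph V} {b : V → Bool}

/-- The inclusion of the old graph into the IIM step graph. -/
def iimEmb (G : SimpleGraph V) (b : V → Bool) : G →g iimStep G b :=
  ⟨Sum.inl, fun h => h⟩

lemma iim_adj_inr_inl_clone {u v : V} (hb : b u = true) :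
    (iimStep G b).Adj (Sum.inr u) (Sum.inl v) ↔ (v = u ∨ G.Adj v u) := by
  show (if b u = true then _ else _) ↔ _
  rw [if_pos hb]

lemma iim_adj_inr_inl_anti {u v : V} (hb : b u = false) :
    (iimStep G b).Adj (Sum.inr u) (Sum.inl v) ↔ ¬(v = u ∨ G.Adj v u) := by
  show (if b u = true then _ else _) ↔ _
  rw [if_neg (by simp [hb])]

lemma iim_dist_inl_inl (hG : G.Connected) (u v : V) :
    (iimStep G b).dist (Sum.inl u) (Sum.inl v) ≤ G.dist u v := by
  obtain ⟨p, hp⟩ := hG.exists_walk_length_eq_dist u v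
  calc (iimStep G b).dist (Sum.inl u) (Sum.inl v) ≤ (p.map (iimEmb G b)).length :=
        SimpleGraph.dist_le _
    _ = G.dist u v := by rw [SimpleGraph.Walk.length_map, hp]

/-- Distance from a clone to an old vertex. -/
lemma iim_dist_clone (hG : G.Connected) {u : V} (hb : b u = true) (x : V) :
    (iimStep G b).dist (Sum.inr u) (Sum.inl x) ≤ max (G.dist u x) 1 := by
  obtain ⟨p, hp⟩ := hG.exists_walk_length_eq_dist u x
  cases p with
  | nil =>
      have hadj : (iimStep G b).Adj (Sum.inr u) (Sum.inl u) :=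
        (iim_adj_inr_inl_clone hb).mpr (Or.inl rfl)
      calc (iimStep G b).dist (Sum.inr u) (Sum.inl u) ≤ (hadj.toWalk).length :=
            SimpleGraph.dist_le _
        _ ≤ max (G.dist u u) 1 := by simp
  | cons h q =>
      rename_i a1
      have hadj : (iimStep G b).Adj (Sum.inr u) (Sum.inl a1) :=
        (iim_adj_inr_inl_clone hb).mpr (Or.inr h.symm)
      calc (iimStep G b).dist (Sum.inr u) (Sum.inl x)
          ≤ (SimpleGraph.Walk.cons hadj (q.map (iimEmb G b))).length :=
            SimpleGraph.dist_le _
        _ = G.dist u x := by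
            show (q.map (iimEmb G b)).length + 1 = G.dist u x
            rw [SimpleGraph.Walk.length_map, ← hp]; simp
        _ ≤ max (G.dist u x) 1 := le_max_left _ _

/-- Every new vertex of a connected IIM step graph has an old neighbor. -/
lemma iim_exists_neighbor (hH : (iimStep G b).Connected) (u : V) :
    ∃ y : V, (iimStep G b).Adj (Sum.inr u) (Sum.inl y) := by
  obtain ⟨w⟩ := hH.preconnected (Sum.inr u) (Sum.inl u)
  cases w with
  | cons h q =>
      rename_i z
      cases z with
      | inl y => exact ⟨y, h⟩
      | inr y => exact h.elim

/-- Distance from an anticlone to an old vertex is at most 4. -/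
lemma iim_dist_anti (hG : G.Connected) (hH : (iimStep G b).Connected)
    {u : V} (hb : b u = false) (x : V) :
    (iimStep G b).dist (Sum.inr u) (Sum.inl x) ≤ 4 := by
  by_cases hx : x = u ∨ G.Adj x u
  · -- x is in the closed neighborhood of u; go out and back
    obtain ⟨y, hy⟩ := iim_exists_neighbor hH u
    have hyN : ¬(y = u ∨ G.Adj y u) := (iim_adj_inr_inl_anti hb).mp hy
    have h2 : 2 ≤ G.dist u y := by
      have h0 : G.dist u y ≠ 0 := fun h =>
        hyN (Or.inl (hG.dist_eq_zero_iff.mp h).symm)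
      have h1 : G.dist u y ≠ 1 := by
        intro h
        exact hyN (Or.inr (SimpleGraph.dist_eq_one_iff_adj.mp h).symm)
      omega
    obtain ⟨p, hp⟩ := hG.exists_walk_length_eq_dist u y
    cases p with
    | nil => rw [SimpleGraph.dist_self] at h2; omega
    | cons h1 q =>
        rename_i a1
        cases q with
        | nil => simp at hp; omega
        | cons hA q2 =>
            rename_i a2
            have ha2 : ¬(a2 = u ∨ G.Adj a2 u) := by
              rintro (hc | hadj)
              · have : G.dist u y ≤ q2.length := by
                  rw [← hc]
                  exact SimpleGraph.dist_le q2
                simp only [SimpleGraph.Walk.length_cons] at hp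
                omega
              · have hd1 : G.dist u a2 ≤ 1 :=
                  le_of_eq (SimpleGraph.dist_eq_one_iff_adj.mpr hadj.symm)
                have ht : G.dist u y ≤ G.dist u a2 + G.dist a2 y := hG.dist_triangle
                have hq : G.dist a2 y ≤ q2.length := SimpleGraph.dist_le q2
                simp only [SimpleGraph.Walk.length_cons] at hp
                omega
            have e1 : (iimStep G b).Adj (Sum.inr u) (Sum.inl a2) :=
              (iim_adj_inr_inl_anti hb).mpr ha2
            have e2 : (iimStep G b).Adj (Sum.inl a2) (Sum.inl a1) := hA.symm
            have e3 : (iimStep G b).Adj (Sum.inl a1) (Sum.inl u) := h1.symm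
            rcases hx with hxu | hadj
            · rw [hxu]
              calc (iimStep G b).dist (Sum.inr u) (Sum.inl u)
                  ≤ (SimpleGraph.Walk.cons e1 (SimpleGraph.Walk.cons e2
                      e3.toWalk)).length := SimpleGraph.dist_le _
                _ ≤ 4 := by simp
            · have e4 : (iimStep G b).Adj (Sum.inl u) (Sum.inl x) := hadj.symm
              calc (iimStep G b).dist (Sum.inr u) (Sum.inl x)
                  ≤ (SimpleGraph.Walk.cons e1 (SimpleGraph.Walk.cons e2
                      (SimpleGraph.Walk.cons e3 e4.toWalk))).length :=
                    SimpleGraph.dist_le _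
                _ ≤ 4 := by simp
  · have hadj : (iimStep G b).Adj (Sum.inr u) (Sum.inl x) :=
      (iim_adj_inr_inl_anti hb).mpr hx
    calc (iimStep G b).dist (Sum.inr u) (Sum.inl x) ≤ (hadj.toWalk).length :=
        SimpleGraph.dist_le _
      _ ≤ 4 := by simp

/-- Distance from any new vertex to an old vertex. -/
lemma iim_dist_inr_inl (hG : G.Connected) (hH : (iimStep G b).Connected)
    (u x : V) :
    (iimStep G b).dist (Sum.inr u) (Sum.inl x) ≤ max (G.dist u x) 4 := by
  cases hb : b u with
  | true => exact le_trans (iim_dist_clone hG hb x) (max_le_max le_rfl (by norm_num))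
  | false => exact le_trans (iim_dist_anti hG hH hb x) (le_max_right _ _)

/-- Distance between two new vertices. -/
lemma iim_dist_inr_inr (hG : G.Connected) (hH : (iimStep G b).Connected)
    (u v : V) :
    (iimStep G b).dist (Sum.inr u) (Sum.inr v) ≤ max (G.dist u v) 5 := by
  cases hbu : b u with
  | false =>
      obtain ⟨t, ht⟩ := iim_exists_neighbor hH v
      have h1 : (iimStep G b).dist (Sum.inr u) (Sum.inl t) ≤ 4 :=
        iim_dist_anti hG hH hbu t
      have h2 : (iimStep G b).dist (Sum.inl t) (Sum.inr v) ≤ 1 := by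
        calc (iimStep G b).dist (Sum.inl t) (Sum.inr v) ≤ (ht.symm.toWalk).length :=
            SimpleGraph.dist_le _
          _ ≤ 1 := by simp
      have := hH.dist_triangle (u := Sum.inr u) (v := Sum.inl t) (w := Sum.inr v)
      refine le_trans ?_ (le_max_right _ 5)
      omega
  | true =>
      cases hbv : b v with
      | false =>
          obtain ⟨t, ht⟩ := iim_exists_neighbor hH u
          have h1 : (iimStep G b).dist (Sum.inr v) (Sum.inl t) ≤ 4 :=
            iim_dist_anti hG hH hbv t
          have h2 : (iimStep G b).dist (Sum.inl t) (Sum.inr u) ≤ 1 := by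
            calc (iimStep G b).dist (Sum.inl t) (Sum.inr u) ≤ (ht.symm.toWalk).length :=
                SimpleGraph.dist_le _
              _ ≤ 1 := by simp
          have := hH.dist_triangle (u := Sum.inr v) (v := Sum.inl t) (w := Sum.inr u)
          rw [SimpleGraph.dist_comm]
          refine le_trans ?_ (le_max_right _ 5)
          omega
      | true =>
          -- both clones
          by_cases hle : G.dist u v ≤ 1
          · have h1 : (iimStep G b).dist (Sum.inr u) (Sum.inl u) ≤ 1 := by
              calc (iimStep G b).dist (Sum.inr u) (Sum.inl u)
                  ≤ (((iim_adj_inr_inl_clone hbu).mpr (Or.inl rfl)).toWalk).length :=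
                    SimpleGraph.dist_le _
                _ ≤ 1 := by simp
            have h2 : (iimStep G b).dist (Sum.inl u) (Sum.inr v) ≤ 1 := by
              rw [SimpleGraph.dist_comm]
              refine le_trans (iim_dist_clone hG hbv u) ?_
              rw [SimpleGraph.dist_comm] at hle
              exact max_le hle le_rfl
            have := hH.dist_triangle (u := Sum.inr u) (v := Sum.inl u) (w := Sum.inr v)
            refine le_trans ?_ (le_max_right _ 5)
            omega
          · push_neg at hle
            obtain ⟨p, hp⟩ := hG.exists_walk_length_eq_dist u v
            cases p with
            | nil => rw [SimpleGraph.dist_self] at hle; omega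
            | cons h q =>
                rename_i a1
                have h1 : (iimStep G b).dist (Sum.inr u) (Sum.inl a1) ≤ 1 := by
                  calc (iimStep G b).dist (Sum.inr u) (Sum.inl a1)
                      ≤ (((iim_adj_inr_inl_clone hbu).mpr (Or.inr h.symm)).toWalk).length :=
                        SimpleGraph.dist_le _
                    _ ≤ 1 := by simp
                have hq : G.dist v a1 ≤ q.length := by
                  rw [SimpleGraph.dist_comm]; exact SimpleGraph.dist_le q
                have h2 : (iimStep G b).dist (Sum.inl a1) (Sum.inr v) ≤ G.dist u v - 1 := by
                  rw [SimpleGraph.dist_comm]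
                  refine le_trans (iim_dist_clone hG hbv a1) ?_
                  simp only [SimpleGraph.Walk.length_cons] at hp
                  refine max_le ?_ (by omega)
                  omega
                have := hH.dist_triangle (u := Sum.inr u) (v := Sum.inl a1) (w := Sum.inr v)
                refine le_trans ?_ (le_max_left _ 5)
                omega

end IIMAux


/-- If `G` is a connected finite graph and `H ∈ IIM_1(G)` is connected,
then `diam(H) ≤ max {diam(G), 5}`. -/
theorem stmt2 {V : Type} [Fintype V] (G : SimpleGraph V) (hG : G.Connected)
    (σ : ∀ i, IterV V i → Bool) (hH : (iimGraph G σ 1).Connected) :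
    (iimGraph G σ 1).diam ≤ max G.diam 5 := by
  have h1 : iimGraph G σ 1 = iimStep G (σ 0) := rfl
  rw [h1] at hH ⊢
  set b := σ 0 with hb
  have hGtop : G.ediam ≠ ⊤ := by
    have : Nonempty V := hG.nonempty
    obtain ⟨u, v, huv⟩ := G.exists_edist_eq_ediam_of_finite
    rw [← huv]
    exact SimpleGraph.edist_ne_top_iff_reachable.mpr (hG.preconnected u v)
  have hGd : ∀ u v : V, G.dist u v ≤ G.diam := fun u v =>
    SimpleGraph.dist_le_diam hGtop
  have key : ∀ a c : V ⊕ V, (iimStep G b).dist a c ≤ max G.diam 5 := by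
    rintro (u | u) (x | x)
    · exact le_trans (iim_dist_inl_inl hG u x) (le_trans (hGd u x) (le_max_left _ _))
    · rw [SimpleGraph.dist_comm]
      exact le_trans (iim_dist_inr_inl hG hH x u) (max_le_max (hGd x u) (by norm_num))
    · exact le_trans (iim_dist_inr_inl hG hH u x) (max_le_max (hGd u x) (by norm_num))
    · exact le_trans (iim_dist_inr_inr hG hH u x) (max_le_max (hGd u x) le_rfl)
  have hne : Nonempty (V ⊕ V) := hH.nonempty
  obtain ⟨a, c, hac⟩ := (iimStep G b).exists_dist_eq_diam
  exact (le_of_eq hac.symm).trans (key a c)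
end

section
/- For any finite simple graph G, any l ∈ ℕ, and any connected H ∈ IIM_l(G), we have diam(H) ≤ max{diam(G), 6} (where if G is disconnected the bound is simply diam(H) ≤ 6). -/
section IIMAux
open SimpleGraph
section helpers
variable {α : Type}

lemma adj_edist_le {A : SimpleGraph α} {a b : α} (h : A.Adj a b) : A.edist a b ≤ 1 :=
  le_of_eq (edist_eq_one_iff_adj.mpr h)

lemma tri {A : SimpleGraph α} {a b c : α} {k1 k2 : ℕ∞}
    (h1 : A.edist a b ≤ k1) (h2 : A.edist b c ≤ k2) : A.edist a c ≤ k1 + k2 :=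
  le_trans (A.edist_triangle) (add_le_add h1 h2)

lemma exists_nbr {A : SimpleGraph α} (hc : A.Connected) {x y : α} (hxy : y ≠ x) :
    ∃ z, A.Adj x z := by
  obtain ⟨p⟩ := hc x y
  cases p with
  | nil => exact absurd rfl hxy
  | cons h q => exact ⟨_, h⟩

end helpers

variable {W : Type} {G : SimpleGraph W} {σ : W → Bool}

lemma adj_ll {u w : W} : (iimStep G σ).Adj (Sum.inl u) (Sum.inl w) ↔ G.Adj u w := Iff.rfl

lemma adj_lr {u w : W} :
    (iimStep G σ).Adj (Sum.inl u) (Sum.inr w) ↔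
      (if σ w = true then u = w ∨ G.Adj u w else ¬(u = w ∨ G.Adj u w)) := Iff.rfl

lemma adj_rl {u w : W} :
    (iimStep G σ).Adj (Sum.inr u) (Sum.inl w) ↔
      (if σ u = true then w = u ∨ G.Adj w u else ¬(w = u ∨ G.Adj w u)) := Iff.rfl

lemma not_adj_rr {u w : W} : ¬ (iimStep G σ).Adj (Sum.inr u) (Sum.inr w) := fun h => h

lemma anti_case (hc : (iimStep G σ).Connected) (v : W) (hv : σ v = false) :
    ∀ x y, (iimStep G σ).edist x y ≤ 6 := by
  set H := iimStep G σ with hH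
  -- adjacency of the anticlone of v
  have hBadj : ∀ {u : W}, ¬(u = v ∨ G.Adj u v) → H.Adj (Sum.inl u) (Sum.inr v) := by
    intro u h
    rw [hH, adj_lr, hv]
    simpa using h
  -- old vertices in N[v] are within distance 1 of v
  have hAdist : ∀ {u : W}, (u = v ∨ G.Adj u v) → H.edist (Sum.inl v) (Sum.inl u) ≤ 1 := by
    intro u h
    rcases h with h | h
    · subst h; simp [edist_self]
    · exact adj_edist_le (adj_ll.mpr h.symm)
  -- B nonempty
  have hex : ∃ b, ¬(b = v ∨ G.Adj b v) := by
    by_contra hA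
    push_neg at hA
    obtain ⟨z, hz⟩ := exists_nbr hc (x := Sum.inr v) (y := Sum.inl v) (by simp)
    cases z with
    | inl u =>
      rw [hH, adj_rl, hv] at hz
      simp only [Bool.false_eq_true, if_false] at hz
      exact hz (hA u)
    | inr u => exact not_adj_rr hz
  obtain ⟨b, hb⟩ := hex
  -- Step 2: bridge trichotomy
  have bridge : (∃ a c, (a = v ∨ G.Adj a v) ∧ ¬(c = v ∨ G.Adj c v) ∧ G.Adj a c) ∨
      (∃ m a c, σ m = false ∧ (a = v ∨ G.Adj a v) ∧ ¬(c = v ∨ G.Adj c v) ∧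
        ¬(a = m ∨ G.Adj a m) ∧ ¬(c = m ∨ G.Adj c m)) := by
    by_contra hno
    have hE1 : ¬ ∃ a c, (a = v ∨ G.Adj a v) ∧ ¬(c = v ∨ G.Adj c v) ∧ G.Adj a c :=
      fun h => hno (Or.inl h)
    have hE2 : ¬ ∃ m a c, σ m = false ∧ (a = v ∨ G.Adj a v) ∧ ¬(c = v ∨ G.Adj c v) ∧
        ¬(a = m ∨ G.Adj a m) ∧ ¬(c = m ∨ G.Adj c m) := fun h => hno (Or.inr h)
    have hOO : ∀ {a c : W}, G.Adj a c → (a = v ∨ G.Adj a v) → (c = v ∨ G.Adj c v) := by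
      intro a c hac ha
      by_contra hcB
      exact hE1 ⟨a, c, ha, hcB, hac⟩
    have hNB : ∀ {m a c : W}, (a = v ∨ G.Adj a v) → ¬(c = v ∨ G.Adj c v) →
        H.Adj (Sum.inl a) (Sum.inr m) → H.Adj (Sum.inl c) (Sum.inr m) → False := by
      intro m a c ha hcB hadjam hadjcm
      cases hsm : σ m with
      | true =>
        rw [hH, adj_lr, hsm] at hadjam hadjcm
        simp only [if_true] at hadjam hadjcm
        rcases hadjam with rfl | ham
        · rcases hadjcm with h | hcm
          · subst h; exact hcB ha
          · exact hE1 ⟨a, c, ha, hcB, hcm.symm⟩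
        · rcases hadjcm with rfl | hcm
          · exact hE1 ⟨a, c, ha, hcB, ham⟩
          · by_cases hm : m = v ∨ G.Adj m v
            · exact hE1 ⟨m, c, hm, hcB, hcm.symm⟩
            · exact hE1 ⟨a, m, ha, hm, ham⟩
      | false =>
        rw [hH, adj_lr, hsm] at hadjam hadjcm
        simp only [Bool.false_eq_true, if_false] at hadjam hadjcm
        exact hE2 ⟨m, a, c, hsm, ha, hcB, hadjam, hadjcm⟩
    have hpres : ∀ {x y : W ⊕ W}, H.Adj x y →
        (match x with
          | Sum.inl u => (u = v ∨ G.Adj u v)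
          | Sum.inr w => ∃ u, (u = v ∨ G.Adj u v) ∧ H.Adj (Sum.inl u) (Sum.inr w)) →
        (match y with
          | Sum.inl u => (u = v ∨ G.Adj u v)
          | Sum.inr w => ∃ u, (u = v ∨ G.Adj u v) ∧ H.Adj (Sum.inl u) (Sum.inr w)) := by
      intro x y hxy hx
      match x, y with
      | Sum.inl a, Sum.inl c => exact hOO hxy hx
      | Sum.inl a, Sum.inr m => exact ⟨a, hx, hxy⟩
      | Sum.inr m, Sum.inl c =>
        by_contra hcB
        obtain ⟨a, ha, haa⟩ := hx
        exact hNB ha hcB haa hxy.symm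
      | Sum.inr m, Sum.inr m' => exact absurd hxy not_adj_rr
    have hwalk : ∀ {x y : W ⊕ W}, H.Walk x y →
        (match x with
          | Sum.inl u => (u = v ∨ G.Adj u v)
          | Sum.inr w => ∃ u, (u = v ∨ G.Adj u v) ∧ H.Adj (Sum.inl u) (Sum.inr w)) →
        (match y with
          | Sum.inl u => (u = v ∨ G.Adj u v)
          | Sum.inr w => ∃ u, (u = v ∨ G.Adj u v) ∧ H.Adj (Sum.inl u) (Sum.inr w)) := by
      intro x y p
      induction p with
      | nil => exact id
      | cons h q ih => exact fun hx => ih (hpres h hx)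
    obtain ⟨p⟩ := hc (Sum.inl v) (Sum.inl b)
    exact hb (hwalk p (Or.inl rfl))
  have hAnti : ∀ {m u : W}, σ m = false → ¬(u = m ∨ G.Adj u m) →
      H.Adj (Sum.inl u) (Sum.inr m) := by
    intro m u hm h
    rw [hH, adj_lr, hm]
    simpa using h
  -- Step 3: distances from v
  obtain ⟨hC1, hC2⟩ : (∀ y, ¬(y = v ∨ G.Adj y v) → H.edist (Sum.inl v) (Sum.inl y) ≤ 4)
      ∧ H.edist (Sum.inl v) (Sum.inr v) ≤ 4 := by
    rcases bridge with ⟨a, c, ha, hcB, hac⟩ | ⟨m, a, c, hm, haA, hcB, ham, hcm⟩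
    · have hav : G.Adj v a := by
        rcases ha with rfl | h
        · exact absurd (Or.inr hac.symm) hcB
        · exact h.symm
      have e1 : H.edist (Sum.inl v) (Sum.inl a) ≤ 1 := adj_edist_le (adj_ll.mpr hav)
      have e2 : H.edist (Sum.inl a) (Sum.inl c) ≤ 1 := adj_edist_le (adj_ll.mpr hac)
      have e3 : H.edist (Sum.inl c) (Sum.inr v) ≤ 1 := adj_edist_le (hBadj hcB)
      constructor
      · intro y hy
        have e4 : H.edist (Sum.inr v) (Sum.inl y) ≤ 1 := adj_edist_le (hBadj hy).symm
        exact le_trans (tri e1 (tri e2 (tri e3 e4))) (by norm_num)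
      · exact le_trans (tri e1 (tri e2 e3)) (by norm_num)
    · have hma : H.Adj (Sum.inl a) (Sum.inr m) := hAnti hm ham
      have hmc : H.Adj (Sum.inl c) (Sum.inr m) := hAnti hm hcm
      by_cases hmA : m = v ∨ G.Adj m v
      · have hmv : G.Adj v m := by
          rcases hmA with rfl | h
          · exact absurd haA ham
          · exact h.symm
        have e1 : H.edist (Sum.inl v) (Sum.inl a) ≤ 1 := hAdist haA
        have e2 : H.edist (Sum.inl a) (Sum.inr m) ≤ 1 := adj_edist_le hma
        have e3 : H.edist (Sum.inr m) (Sum.inl c) ≤ 1 := adj_edist_le hmc.symm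
        have e4 : H.edist (Sum.inl c) (Sum.inr v) ≤ 1 := adj_edist_le (hBadj hcB)
        constructor
        · intro y hy
          by_cases hym : y = m ∨ G.Adj y m
          · have hgym : G.Adj y m := by
              rcases hym with rfl | h
              · exact absurd hmA hy
              · exact h
            have f1 : H.edist (Sum.inl v) (Sum.inl m) ≤ 1 := adj_edist_le (adj_ll.mpr hmv)
            have f2 : H.edist (Sum.inl m) (Sum.inl y) ≤ 1 := adj_edist_le (adj_ll.mpr hgym.symm)
            exact le_trans (tri f1 f2) (by norm_num)
          · have e3' : H.edist (Sum.inr m) (Sum.inl y) ≤ 1 := adj_edist_le (hAnti hm hym).symm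
            exact le_trans (tri e1 (tri e2 e3')) (by norm_num)
        · exact le_trans (tri e1 (tri e2 (tri e3 e4))) (by norm_num)
      · have hvm : H.Adj (Sum.inl v) (Sum.inr m) := by
          refine hAnti hm ?_
          rintro (rfl | h)
          · exact hmA (Or.inl rfl)
          · exact hmA (Or.inr h.symm)
        have e1 : H.edist (Sum.inl v) (Sum.inr m) ≤ 1 := adj_edist_le hvm
        have e2 : H.edist (Sum.inr m) (Sum.inl c) ≤ 1 := adj_edist_le hmc.symm
        have e3 : H.edist (Sum.inl c) (Sum.inr v) ≤ 1 := adj_edist_le (hBadj hcB)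
        constructor
        · intro y hy
          by_cases hym : y = m ∨ G.Adj y m
          · have e4 : H.edist (Sum.inr v) (Sum.inl y) ≤ 1 := adj_edist_le (hBadj hy).symm
            exact le_trans (tri e1 (tri e2 (tri e3 e4))) (by norm_num)
          · have e2' : H.edist (Sum.inr m) (Sum.inl y) ≤ 1 := adj_edist_le (hAnti hm hym).symm
            exact le_trans (tri e1 e2') (by norm_num)
        · exact le_trans (tri e1 (tri e2 e3)) (by norm_num)
  -- Step 4: classification of vertices
  have classify : ∀ x : W ⊕ W, H.edist (Sum.inl v) x ≤ 1 ∨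
      (∃ c, ¬(c = v ∨ G.Adj c v) ∧ H.edist (Sum.inl c) x ≤ 1) ∨
      (∃ w x₁, (w = v ∨ G.Adj w v) ∧ w ≠ v ∧
        (∀ y, ¬(y = v ∨ G.Adj y v) → G.Adj y w) ∧
        (x₁ = v ∨ G.Adj x₁ v) ∧ H.Adj (Sum.inl x₁) x) := by
    intro x
    match x with
    | Sum.inl u =>
      by_cases hu : u = v ∨ G.Adj u v
      · exact Or.inl (hAdist hu)
      · exact Or.inr (Or.inl ⟨u, hu, by simp [edist_self]⟩)
    | Sum.inr w =>
      by_cases hBn : ∃ c, ¬(c = v ∨ G.Adj c v) ∧ H.Adj (Sum.inl c) (Sum.inr w)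
      · obtain ⟨c, hc1, hc2⟩ := hBn
        exact Or.inr (Or.inl ⟨c, hc1, adj_edist_le hc2⟩)
      · have hAll : ∀ c, H.Adj (Sum.inl c) (Sum.inr w) → (c = v ∨ G.Adj c v) := by
          intro c hadj
          by_contra hcB
          exact hBn ⟨c, hcB, hadj⟩
        obtain ⟨z, hz⟩ := exists_nbr hc (x := Sum.inr w) (y := Sum.inl v) (by simp)
        match z, hz with
        | Sum.inl u, hz =>
          have hu : H.Adj (Sum.inl u) (Sum.inr w) := hz.symm
          cases hsw : σ w with
          | true =>
            have hwA : w = v ∨ G.Adj w v := hAll w (by rw [hH, adj_lr, hsw]; simp)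
            refine Or.inl (adj_edist_le ?_)
            rw [hH, adj_lr, hsw]
            simp only [if_true]
            rcases hwA with rfl | h
            · exact Or.inl rfl
            · exact Or.inr h.symm
          | false =>
            have hhub : ∀ y, ¬(y = v ∨ G.Adj y v) → (y = w ∨ G.Adj y w) := by
              intro y hy
              by_contra hyw
              exact hy (hAll y (hAnti hsw hyw))
            by_cases hwA : w = v ∨ G.Adj w v
            · have hwv : w ≠ v := by
                rintro rfl
                exact hb (hhub b hb)
              refine Or.inr (Or.inr ⟨w, u, hwA, hwv, ?_, hAll u hu, hu⟩)
              intro y hy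
              rcases hhub y hy with rfl | h
              · exact absurd hwA hy
              · exact h
            · refine Or.inl (adj_edist_le (hAnti hsw ?_))
              rintro (rfl | h)
              · exact hwA (Or.inl rfl)
              · exact hwA (Or.inr h.symm)
        | Sum.inr u, hz => exact absurd hz not_adj_rr
  -- Step 5: pairwise bounds
  intro x y
  have dist2 : ∀ {w₁ x₁ : W} {z : W ⊕ W}, (w₁ = v ∨ G.Adj w₁ v) → (x₁ = v ∨ G.Adj x₁ v) →
      H.Adj (Sum.inl x₁) z → H.edist (Sum.inl v) z ≤ 2 := by
    intro w₁ x₁ z _ hx₁A hx₁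
    exact le_trans (tri (hAdist hx₁A) (adj_edist_le hx₁)) (by norm_num)
  rcases classify x with hx | ⟨c₁, hc₁, hd₁⟩ | ⟨w₁, x₁, hw₁A, hw₁v, hhub₁, hx₁A, hx₁⟩ <;>
    rcases classify y with hy | ⟨c₂, hc₂, hd₂⟩ | ⟨w₂, x₂, hw₂A, hw₂v, hhub₂, hx₂A, hx₂⟩
  · -- (0,0)
    rw [H.edist_comm] at hx
    exact le_trans (tri hx hy) (by norm_num)
  · -- (0,1)
    rw [H.edist_comm] at hx
    exact le_trans (tri hx (tri (hC1 c₂ hc₂) hd₂)) (by norm_num)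
  · -- (0,2)
    rw [H.edist_comm] at hx
    exact le_trans (tri hx (dist2 hw₂A hx₂A hx₂)) (by norm_num)
  · -- (1,0)
    rw [H.edist_comm] at hd₁
    have := hC1 c₁ hc₁
    rw [H.edist_comm] at this
    exact le_trans (tri hd₁ (tri this hy)) (by norm_num)
  · -- (1,1)
    rw [H.edist_comm] at hd₁
    have e1 : H.edist (Sum.inl c₁) (Sum.inr v) ≤ 1 := adj_edist_le (hBadj hc₁)
    have e2 : H.edist (Sum.inr v) (Sum.inl c₂) ≤ 1 := adj_edist_le (hBadj hc₂).symm
    exact le_trans (tri hd₁ (tri e1 (tri e2 hd₂))) (by norm_num)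
  · -- (1,2): x near c₁ ∈ B, y has nbr x₂ ∈ A, hub w₂ adjacent to all of B
    rw [H.edist_comm] at hd₁
    have e1 : H.edist (Sum.inl c₁) (Sum.inl w₂) ≤ 1 := adj_edist_le (adj_ll.mpr (hhub₂ c₁ hc₁))
    have e2 : H.edist (Sum.inl w₂) (Sum.inl v) ≤ 1 := by
      rcases hw₂A with rfl | h
      · exact absurd rfl hw₂v
      · exact adj_edist_le (adj_ll.mpr h)
    have e3 : H.edist (Sum.inl v) (Sum.inl x₂) ≤ 1 := hAdist hx₂A
    have e4 : H.edist (Sum.inl x₂) y ≤ 1 := adj_edist_le hx₂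
    exact le_trans (tri hd₁ (tri e1 (tri e2 (tri e3 e4)))) (by norm_num)
  · -- (2,0)
    have := dist2 hw₁A hx₁A hx₁
    rw [H.edist_comm] at this
    exact le_trans (tri this hy) (by norm_num)
  · -- (2,1)
    have e1 : H.edist x (Sum.inl x₁) ≤ 1 := adj_edist_le hx₁.symm
    have e2 : H.edist (Sum.inl x₁) (Sum.inl v) ≤ 1 := by
      have := hAdist hx₁A
      rwa [H.edist_comm] at this
    have e3 : H.edist (Sum.inl v) (Sum.inl w₁) ≤ 1 := by
      rcases hw₁A with rfl | h
      · exact absurd rfl hw₁v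
      · exact adj_edist_le (adj_ll.mpr h.symm)
    have e4 : H.edist (Sum.inl w₁) (Sum.inl c₂) ≤ 1 := adj_edist_le (adj_ll.mpr (hhub₁ c₂ hc₂).symm)
    exact le_trans (tri e1 (tri e2 (tri e3 (tri e4 hd₂)))) (by norm_num)
  · -- (2,2)
    have h1 := dist2 hw₁A hx₁A hx₁
    rw [H.edist_comm] at h1
    exact le_trans (tri h1 (dist2 hw₂A hx₂A hx₂)) (by norm_num)



def inlHom (G : SimpleGraph W) (σ : W → Bool) : G →g iimStep G σ :=
  ⟨Sum.inl, fun {_ _} h => h⟩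

lemma clone_aux1 (hσ : ∀ u, σ u = true) : ∀ {u w : W} (p : G.Walk u w),
    (iimStep G σ).edist (Sum.inl u) (Sum.inr w) ≤ max (p.length : ℕ∞) 1 := by
  intro u w p
  induction p with
  | nil =>
    refine le_trans (adj_edist_le ?_) (le_max_right _ _)
    rw [adj_lr, hσ _]
    simp
  | @cons u c w h q ih =>
    by_cases hq : q.length = 0
    · have hcw : c = w := SimpleGraph.Walk.eq_of_length_eq_zero hq
      subst hcw
      refine le_trans (adj_edist_le ?_) (le_max_right _ _)
      rw [adj_lr, hσ _]
      simp only [if_true]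
      exact Or.inr h
    · have h1 : (iimStep G σ).edist (Sum.inl u) (Sum.inl c) ≤ 1 :=
        adj_edist_le (adj_ll.mpr h)
      refine le_trans (tri h1 ih) ?_
      have hq1 : (1 : ℕ∞) ≤ (q.length : ℕ∞) := by
        exact_mod_cast Nat.one_le_iff_ne_zero.mpr hq
      rw [max_eq_left hq1]
      refine le_trans ?_ (le_max_left _ _)
      rw [SimpleGraph.Walk.length_cons]
      push_cast
      rw [add_comm]

lemma clone_aux2 (hσ : ∀ u, σ u = true) : ∀ {u w : W} (p : G.Walk u w),
    (iimStep G σ).edist (Sum.inr u) (Sum.inr w) ≤ max (p.length : ℕ∞) 2 := by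
  intro u w p
  cases p with
  | nil => simp [SimpleGraph.edist_self]
  | @cons u c w h q =>
    have e1 : (iimStep G σ).edist (Sum.inr u) (Sum.inl c) ≤ 1 := by
      refine adj_edist_le ?_
      rw [adj_rl, hσ _]
      simp only [if_true]
      exact Or.inr h.symm
    refine le_trans (tri e1 (clone_aux1 hσ q)) ?_
    by_cases hq : q.length = 0
    · rw [hq]
      rw [SimpleGraph.Walk.length_cons, hq]
      norm_num
    · have hq1 : (1 : ℕ∞) ≤ (q.length : ℕ∞) := by
        exact_mod_cast Nat.one_le_iff_ne_zero.mpr hq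
      rw [max_eq_left hq1]
      refine le_trans ?_ (le_max_left _ _)
      rw [SimpleGraph.Walk.length_cons]
      push_cast
      rw [add_comm]

lemma clone_case (hσ : ∀ u, σ u = true) (hc : (iimStep G σ).Connected) :
    G.Connected ∧ ∀ x y, (iimStep G σ).edist x y ≤ max G.ediam 2 := by
  have hedge : ∀ {x z : W ⊕ W}, (iimStep G σ).Adj x z →
      G.Reachable (Sum.elim id id x) (Sum.elim id id z) := by
    intro x z hxz
    match x, z with
    | Sum.inl u, Sum.inl w => exact (adj_ll.mp hxz).reachable
    | Sum.inl u, Sum.inr w =>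
      rw [adj_lr, hσ w] at hxz
      simp only [if_true] at hxz
      rcases hxz with rfl | h
      · exact SimpleGraph.Reachable.refl _
      · exact h.reachable
    | Sum.inr u, Sum.inl w =>
      rw [adj_rl, hσ u] at hxz
      simp only [if_true] at hxz
      rcases hxz with rfl | h
      · exact SimpleGraph.Reachable.refl _
      · exact h.symm.reachable
    | Sum.inr u, Sum.inr w => exact absurd hxz not_adj_rr
  have hproj : ∀ {x y : W ⊕ W}, (iimStep G σ).Walk x y →
      G.Reachable (Sum.elim id id x) (Sum.elim id id y) := by
    intro x y p
    induction p with
    | nil => exact SimpleGraph.Reachable.refl _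
    | cons h q ih => exact SimpleGraph.Reachable.trans (hedge h) ih
  have hne : Nonempty W := by
    obtain ⟨x⟩ := hc.nonempty
    cases x with
    | inl u => exact ⟨u⟩
    | inr u => exact ⟨u⟩
  have hG : G.Connected := by
    rw [SimpleGraph.connected_iff]
    refine ⟨fun u w => ?_, hne⟩
    obtain ⟨p⟩ := hc (Sum.inl u) (Sum.inl w)
    exact hproj p
  refine ⟨hG, ?_⟩
  have key : ∀ u w : W, ∃ p : G.Walk u w, (p.length : ℕ∞) ≤ G.ediam := by
    intro u w
    obtain ⟨p, hp⟩ := hG.exists_walk_length_eq_edist u w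
    exact ⟨p, by rw [hp]; exact G.edist_le_ediam⟩
  intro x y
  match x, y with
  | Sum.inl u, Sum.inl w =>
    obtain ⟨p, hp⟩ := key u w
    refine le_trans ?_ (le_trans (le_trans hp (le_max_left _ _)) le_rfl)
    have := SimpleGraph.edist_le (p.map (inlHom G σ))
    rwa [SimpleGraph.Walk.length_map] at this
  | Sum.inl u, Sum.inr w =>
    obtain ⟨p, hp⟩ := key u w
    exact le_trans (clone_aux1 hσ p) (max_le_max hp (by norm_num))
  | Sum.inr u, Sum.inl w =>
    rw [SimpleGraph.edist_comm]
    obtain ⟨p, hp⟩ := key w u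
    exact le_trans (clone_aux1 hσ p) (max_le_max hp (by norm_num))
  | Sum.inr u, Sum.inr w =>
    obtain ⟨p, hp⟩ := key u w
    exact le_trans (clone_aux2 hσ p) (max_le_max hp le_rfl)

lemma ediam_bound_to_diam {α : Type} {A : SimpleGraph α} {k : ℕ}
    (h : ∀ x y, A.edist x y ≤ (k : ℕ∞)) : A.diam ≤ k := by
  have h2 : A.ediam ≤ (k : ℕ∞) := SimpleGraph.ediam_le_of_edist_le h
  exact ENat.toNat_le_of_le_coe h2

end IIMAux

/-- For any finite graph `G`, any `l ∈ ℕ`, and any connected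
`H ∈ IIM_l(G)`, `diam(H) ≤ max {diam(G), 6}`.  (For disconnected `G`, Mathlib's
convention gives `G.diam = 0`, so the bound reads `diam(H) ≤ 6`.) -/
theorem stmt4 {V : Type} [Fintype V] (G : SimpleGraph V) (l : ℕ)
    (σ : ∀ i, IterV V i → Bool) (hH : (iimGraph G σ l).Connected) :
    (iimGraph G σ l).diam ≤ max G.diam 6 := by
  induction l with
  | zero => exact le_max_left _ _
  | succ l ih =>
    have hH' : (iimStep (iimGraph G σ l) (σ l)).Connected := hH
    by_cases hall : ∀ u, σ l u = true
    · obtain ⟨hGc, hbd⟩ := clone_case hall hH'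
      have ih' : (iimGraph G σ l).diam ≤ max G.diam 6 := ih hGc
      have hne : Nonempty (IterV V l) := hGc.nonempty
      have hfin : (iimGraph G σ l).ediam ≠ ⊤ := by
        obtain ⟨u, w, huw⟩ := SimpleGraph.exists_edist_eq_ediam_of_finite
          (G := iimGraph G σ l)
        rw [← huw]
        exact SimpleGraph.edist_ne_top_iff_reachable.mpr (hGc u w)
      have hco : (iimGraph G σ l).ediam = ((iimGraph G σ l).diam : ℕ∞) :=
        (ENat.coe_toNat hfin).symm
      refine le_trans (ediam_bound_to_diam (k := max G.diam 6) fun x y => ?_) le_rfl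
      refine le_trans (hbd x y) ?_
      rw [hco]
      have h1 : ((iimGraph G σ l).diam : ℕ∞) ≤ ((max G.diam 6 : ℕ) : ℕ∞) := by
        exact_mod_cast ih'
      refine max_le (le_trans h1 le_rfl) ?_
      exact_mod_cast le_trans (by norm_num : (2:ℕ) ≤ max G.diam 6) le_rfl
    · push_neg at hall
      obtain ⟨v, hv⟩ := hall
      have hv' : σ l v = false := by
        cases h : σ l v
        · rfl
        · exact absurd h hv
      have hbd := anti_case hH' v hv'
      refine le_trans (ediam_bound_to_diam (k := 6) fun x y => by exact_mod_cast hbd x y) ?_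
      exact le_max_right _ _
end

section
/- Let G be a finite simple graph that is connected, and let H ∈ IIM_1(G) be connected. Then diam(H) ≤ diam(G) + 2. -/
open SimpleGraph

lemma step_diam {V : Type} [Fintype V] (G : SimpleGraph V) (hG : G.Connected)
    (s : V → Bool) (hH : (iimStep G s).Connected) :
    (iimStep G s).diam ≤ G.diam + 2 := by
  have hne : Nonempty V := hG.nonempty
  have hGtop : G.ediam ≠ ⊤ := by
    obtain ⟨u, v, h⟩ := G.exists_edist_eq_ediam_of_finite
    rw [← h]
    exact edist_ne_top_iff_reachable.mpr (hG u v)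
  let f : G →g iimStep G s := ⟨Sum.inl, fun {a b} h => h⟩
  have hll : ∀ a b : V, (iimStep G s).edist (Sum.inl a) (Sum.inl b) ≤ G.edist a b := by
    intro a b
    obtain ⟨p, hp⟩ := (hG a b).exists_walk_length_eq_edist
    rw [← hp]
    calc (iimStep G s).edist (Sum.inl a) (Sum.inl b) ≤ (p.map f).length := edist_le _
    _ = (p.length : ℕ∞) := by rw [SimpleGraph.Walk.length_map]
  have hnb : ∀ v : V, ∃ w : V, (iimStep G s).Adj (Sum.inr v) (Sum.inl w) := by
    intro v
    obtain ⟨p⟩ := hH.preconnected (Sum.inr v) (Sum.inl v)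
    cases p with
    | @cons _ x _ h q =>
      match x, h with
      | Sum.inl w, h => exact ⟨w, h⟩
      | Sum.inr w, h => exact (h : False).elim
  have hbound : ∀ v : V, ∃ w : V, (iimStep G s).edist (Sum.inl w) (Sum.inr v) ≤ 1 := by
    intro v
    obtain ⟨w, hw⟩ := hnb v
    exact ⟨w, (edist_eq_one_iff_adj.mpr hw.symm).le⟩
  have key : ∀ x y, (iimStep G s).edist x y ≤ G.ediam + 2 := by
    have hin : ∀ (a : V) (v : V), (iimStep G s).edist (Sum.inl a) (Sum.inr v) ≤ G.ediam + 1 := by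
      intro a v
      obtain ⟨w, hw⟩ := hbound v
      calc (iimStep G s).edist (Sum.inl a) (Sum.inr v)
          ≤ (iimStep G s).edist (Sum.inl a) (Sum.inl w)
            + (iimStep G s).edist (Sum.inl w) (Sum.inr v) := SimpleGraph.edist_triangle
        _ ≤ G.ediam + 1 := add_le_add ((hll a w).trans edist_le_ediam) hw
    rintro (a | a) (b | b)
    · exact ((hll a b).trans edist_le_ediam).trans le_self_add
    · exact (hin a b).trans (by gcongr <;> norm_num)
    · rw [SimpleGraph.edist_comm]
      exact (hin b a).trans (by gcongr <;> norm_num)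
    · obtain ⟨w, hw⟩ := hbound a
      calc (iimStep G s).edist (Sum.inr a) (Sum.inr b)
          ≤ (iimStep G s).edist (Sum.inr a) (Sum.inl w)
            + (iimStep G s).edist (Sum.inl w) (Sum.inr b) := SimpleGraph.edist_triangle
        _ ≤ 1 + (G.ediam + 1) := by
            rw [SimpleGraph.edist_comm]
            exact add_le_add hw (hin w b)
        _ = G.ediam + 2 := by ring
  have hE : (iimStep G s).ediam ≤ G.ediam + 2 := ediam_le_of_edist_le key
  have h2 : G.ediam + 2 ≠ ⊤ := by
    intro h
    exact hGtop ((WithTop.add_eq_top.mp h).resolve_right (ENat.ofNat_ne_top 2))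
  have := ENat.toNat_le_toNat hE h2
  rwa [ENat.toNat_add hGtop (by norm_num)] at this

/-- If `G` is a connected finite graph and `H ∈ IIM_1(G)` is connected,
then `diam(H) ≤ diam(G) + 2`. -/
theorem stmt5 {V : Type} [Fintype V] (G : SimpleGraph V) (hG : G.Connected)
    (σ : ∀ i, IterV V i → Bool) (hH : (iimGraph G σ 1).Connected) :
    (iimGraph G σ 1).diam ≤ G.diam + 2 :=
  step_diam G hG (σ 0) hH
end

section
/- Let G be a finite simple graph with dom(G) ≥ 2, and define b(G) = min { |N_G(u) ∩ N_G(v)| : u, v ∈ V(G), u ≠ v, uv ∉ E(G) } (this minimum is over a nonempty set since dom(G) ≥ 2). Then for every i ∈ ℕ and every H ∈ IIM_i(G), dom(H) ≤ dom(G) + b(G) + 3. -/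
/-- `D` is a dominating set of `H`: every vertex lies in `D` or is adjacent to a
vertex of `D`. -/
def IsDominating {W : Type} (H : SimpleGraph W) (D : Set W) : Prop :=
  ∀ v : W, v ∈ D ∨ ∃ u ∈ D, H.Adj u v

/-- The domination number of `H`: the least size of a dominating set. -/
noncomputable def domNum {W : Type} (H : SimpleGraph W) : ℕ :=
  sInf {n | ∃ D : Set W, IsDominating H D ∧ D.ncard = n}

/-- `D` is a dual dominating set of `H`: a dominating set such that moreover every
vertex `v` has some `w ∈ D` with `w ∉ N[v]` (i.e. `w ≠ v` and `w` not adjacent to `v`). -/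
def IsDualDominating {W : Type} (H : SimpleGraph W) (D : Set W) : Prop :=
  IsDominating H D ∧ ∀ v : W, ∃ w ∈ D, w ≠ v ∧ ¬ H.Adj w v
section Aux

lemma domNum_le_card {W : Type} (H : SimpleGraph W) (D : Set W) (hD : IsDominating H D) :
    domNum H ≤ D.ncard := Nat.sInf_le ⟨D, hD, rfl⟩

lemma exists_min_dom {W : Type} (H : SimpleGraph W) :
    ∃ D : Set W, IsDominating H D ∧ D.ncard = domNum H := by
  have hne : {n | ∃ D : Set W, IsDominating H D ∧ D.ncard = n}.Nonempty :=
    ⟨(Set.univ : Set W).ncard, Set.univ, fun v => Or.inl (Set.mem_univ v), rfl⟩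
  exact Nat.sInf_mem hne

lemma exists_nonneighbor {V : Type} (G : SimpleGraph V) (hdom : 2 ≤ domNum G)
    (x : V) : ∃ y, y ≠ x ∧ ¬ G.Adj x y := by
  by_contra h
  push_neg at h
  have hd : IsDominating G {x} := by
    intro v
    by_cases hv : v = x
    · exact Or.inl (by simp [hv])
    · exact Or.inr ⟨x, rfl, h v hv⟩
  have := domNum_le_card G {x} hd
  simp [Set.ncard_singleton] at this
  omega

lemma liftV_injective {V : Type} : ∀ l, Function.Injective (fun x : V => liftV x l)
  | 0 => fun _ _ h => h
  | l + 1 => fun a c h => liftV_injective l (Sum.inl.inj h)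

lemma iimStep_dual {W : Type} (H : SimpleGraph W) (τ : W → Bool) (D : Set W)
    (hD : IsDualDominating H D) :
    IsDualDominating (iimStep H τ) (Sum.inl '' D) := by
  obtain ⟨hdom, hdual⟩ := hD
  constructor
  · rintro (v | v)
    · rcases hdom v with hv | ⟨u, hu, hadj⟩
      · exact Or.inl ⟨v, hv, rfl⟩
      · exact Or.inr ⟨Sum.inl u, ⟨u, hu, rfl⟩, hadj⟩
    · cases hτ : τ v with
      | true =>
        rcases hdom v with hv | ⟨u, hu, hadj⟩
        · refine Or.inr ⟨Sum.inl v, ⟨v, hv, rfl⟩, ?_⟩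
          show if τ v = true then v = v ∨ H.Adj v v else ¬(v = v ∨ H.Adj v v)
          simp [hτ]
        · refine Or.inr ⟨Sum.inl u, ⟨u, hu, rfl⟩, ?_⟩
          show if τ v = true then u = v ∨ H.Adj u v else ¬(u = v ∨ H.Adj u v)
          simp [hτ, hadj]
      | false =>
        obtain ⟨w, hw, hne, hnadj⟩ := hdual v
        refine Or.inr ⟨Sum.inl w, ⟨w, hw, rfl⟩, ?_⟩
        show if τ v = true then w = v ∨ H.Adj w v else ¬(w = v ∨ H.Adj w v)
        simp [hτ, hne, hnadj]
  · rintro (v | v)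
    · obtain ⟨w, hw, hne, hnadj⟩ := hdual v
      exact ⟨Sum.inl w, ⟨w, hw, rfl⟩, by simpa using hne, hnadj⟩
    · cases hτ : τ v with
      | true =>
        obtain ⟨w, hw, hne, hnadj⟩ := hdual v
        refine ⟨Sum.inl w, ⟨w, hw, rfl⟩, Sum.inl_ne_inr, ?_⟩
        show ¬ if τ v = true then w = v ∨ H.Adj w v else ¬(w = v ∨ H.Adj w v)
        simp [hτ, hne, hnadj]
      | false =>
        rcases hdom v with hv | ⟨u, hu, hadj⟩
        · refine ⟨Sum.inl v, ⟨v, hv, rfl⟩, Sum.inl_ne_inr, ?_⟩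
          show ¬ if τ v = true then v = v ∨ H.Adj v v else ¬(v = v ∨ H.Adj v v)
          simp [hτ]
        · refine ⟨Sum.inl u, ⟨u, hu, rfl⟩, Sum.inl_ne_inr, ?_⟩
          show ¬ if τ v = true then u = v ∨ H.Adj u v else ¬(u = v ∨ H.Adj u v)
          simp [hτ, hadj]

lemma iimGraph_dual {V : Type} (G : SimpleGraph V) (σ : ∀ i, IterV V i → Bool)
    (D : Set V) (hD : IsDualDominating G D) (l : ℕ) :
    IsDualDominating (iimGraph G σ l) ((fun x => liftV x l) '' D) := by
  induction l with
  | zero =>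
    show IsDualDominating G ((fun x => x) '' D)
    rw [Set.image_id']
    exact hD
  | succ l ih =>
      have h := iimStep_dual (iimGraph G σ l) (σ l) _ ih
      have himg : (fun x => liftV x (l + 1)) '' D
          = Sum.inl '' ((fun x => liftV x l) '' D) := by
        rw [Set.image_image]
        rfl
      rw [himg]
      exact h

end Aux

theorem stmt10' {V : Type} [Fintype V] (G : SimpleGraph V)
    (hdom : 2 ≤ domNum G)
    (b : ℕ)
    (hb : b = sInf {k | ∃ u v : V, u ≠ v ∧ ¬ G.Adj u v ∧
      (G.neighborSet u ∩ G.neighborSet v).ncard = k})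
    (i : ℕ) (σ : ∀ j, IterV V j → Bool) :
    domNum (iimGraph G σ i) ≤ domNum G + b + 3 := by
  classical
  by_cases hV : Nonempty V
  case neg =>
    have hd : IsDominating G (∅ : Set V) := fun v => (hV ⟨v⟩).elim
    have := domNum_le_card G ∅ hd
    simp at this
    omega
  obtain ⟨x⟩ := hV
  obtain ⟨y, hyx, hxy⟩ := exists_nonneighbor G hdom x
  have hbset : {k | ∃ u v : V, u ≠ v ∧ ¬ G.Adj u v ∧
      (G.neighborSet u ∩ G.neighborSet v).ncard = k}.Nonempty :=
    ⟨_, x, y, hyx.symm, hxy, rfl⟩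
  obtain ⟨u, v, huv, hadj, hS⟩ : ∃ u v : V, u ≠ v ∧ ¬ G.Adj u v ∧
      (G.neighborSet u ∩ G.neighborSet v).ncard = b := by
    rw [hb]; exact Nat.sInf_mem hbset
  obtain ⟨A, hA, hAcard⟩ := exists_min_dom G
  choose yf hyf1 hyf2 using exists_nonneighbor G hdom
  set S : Set V := G.neighborSet u ∩ G.neighborSet v with hSdef
  set D : Set V := A ∪ {u, v} ∪ (yf '' S) with hDdef
  have hdual : IsDualDominating G D := by
    constructor
    · intro w
      rcases hA w with h | ⟨a, ha, hadj'⟩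
      · exact Or.inl (Or.inl (Or.inl h))
      · exact Or.inr ⟨a, Or.inl (Or.inl ha), hadj'⟩
    · intro w
      by_cases h1 : ∃ a ∈ A, a ≠ w ∧ ¬ G.Adj a w
      · obtain ⟨a, ha, ha2, ha3⟩ := h1
        exact ⟨a, Or.inl (Or.inl ha), ha2, ha3⟩
      by_cases h2 : u ≠ w ∧ ¬ G.Adj u w
      · exact ⟨u, Or.inl (Or.inr (Or.inl rfl)), h2.1, h2.2⟩
      by_cases h3 : v ≠ w ∧ ¬ G.Adj v w
      · exact ⟨v, Or.inl (Or.inr (Or.inr rfl)), h3.1, h3.2⟩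
      push_neg at h2 h3
      have hneu : u ≠ w := by
        rintro rfl
        exact hadj (G.adj_symm (h3 huv.symm))
      have hnev : v ≠ w := by
        rintro rfl
        exact hadj (h2 huv)
      have hwS : w ∈ S := ⟨h2 hneu, h3 hnev⟩
      exact ⟨yf w, Or.inr ⟨w, hwS, rfl⟩, hyf1 w, fun hc => hyf2 w (G.adj_symm hc)⟩
  have hcard : D.ncard ≤ domNum G + b + 2 := by
    have c1 : D.ncard ≤ (A ∪ {u, v}).ncard + (yf '' S).ncard := Set.ncard_union_le _ _
    have c2 : (A ∪ {u, v}).ncard ≤ A.ncard + ({u, v} : Set V).ncard :=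
      Set.ncard_union_le _ _
    have c3 : ({u, v} : Set V).ncard = 2 := Set.ncard_pair huv
    have c4 : (yf '' S).ncard ≤ S.ncard := Set.ncard_image_le (Set.toFinite S)
    omega
  have hlift := iimGraph_dual G σ D hdual i
  have hle : domNum (iimGraph G σ i) ≤ ((fun x => liftV x i) '' D).ncard :=
    domNum_le_card _ _ hlift.1
  rw [Set.ncard_image_of_injective D (liftV_injective i)] at hle
  omega

/-- Let `G` be a finite graph with `dom(G) ≥ 2` and let
`b(G) = min {|N_G(u) ∩ N_G(v)| : u ≠ v, uv ∉ E(G)}`.  Then for every `i ∈ ℕ` and every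
`H ∈ IIM_i(G)`, `dom(H) ≤ dom(G) + b(G) + 3`. -/
theorem stmt10 {V : Type} [Fintype V] (G : SimpleGraph V)
    (hdom : 2 ≤ domNum G)
    (b : ℕ)
    (hb : b = sInf {k | ∃ u v : V, u ≠ v ∧ ¬ G.Adj u v ∧
      (G.neighborSet u ∩ G.neighborSet v).ncard = k})
    (i : ℕ) (σ : ∀ j, IterV V j → Bool) :
    domNum (iimGraph G σ i) ≤ domNum G + b + 3 := by
  exact stmt10' G hdom b hb i σ
end

section
/- Let H be a finite simple graph containing pairwise disjoint sets A_1, A_2, A_3 ⊆ V(H), each inducing a clique in H, together with vertices v_1 ∈ A_1, v_2 ∈ A_2, v_3 ∈ A_3 such that v_1 is non-adjacent to every vertex of A_2, v_2 is non-adjacent to every vertex of A_3, and v_3 is non-adjacent to every vertex of A_1 (a non-adjacent triple of cliques). Then for every graph H' ∈ IIM_1(H) (i.e., for every choice of cloning or anticloning each vertex of H) there exist pairwise disjoint sets B_1, B_2, B_3 ⊆ V(H') such that: (1) A_i ⊆ B_i for each i; (2) each B_i induces a clique in H'; (3) |B_i| = |A_i| + 1 for at least two distinct indices i ∈ {1,2,3};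 and (4) B_1, B_2, B_3, taken in some cyclic order, form a non-adjacent triple in H'. -/
/-- Three pairwise disjoint vertex sets form a *non-adjacent triple* if there are
`v₁ ∈ A₁` non-adjacent to every vertex of `A₂`, `v₂ ∈ A₂` non-adjacent to every vertex
of `A₃`, and `v₃ ∈ A₃` non-adjacent to every vertex of `A₁`. -/
def NonAdjTriple {W : Type} (H : SimpleGraph W) (A₁ A₂ A₃ : Set W) : Prop :=
  (∃ v ∈ A₁, ∀ u ∈ A₂, ¬ H.Adj v u) ∧
  (∃ v ∈ A₂, ∀ u ∈ A₃, ¬ H.Adj v u) ∧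
  (∃ v ∈ A₃, ∀ u ∈ A₁, ¬ H.Adj v u)
section IIMHelpers

variable {W : Type} {H : SimpleGraph W} {σ : W → Bool}

lemma iim_adj_inl_inl {u v : W} :
    (iimStep H σ).Adj (Sum.inl u) (Sum.inl v) ↔ H.Adj u v := Iff.rfl

lemma iim_adj_inl_inr {u v : W} :
    (iimStep H σ).Adj (Sum.inl u) (Sum.inr v) ↔
      (if σ v = true then u = v ∨ H.Adj u v else ¬(u = v ∨ H.Adj u v)) := Iff.rfl

lemma iim_adj_inr_inl {u v : W} :
    (iimStep H σ).Adj (Sum.inr u) (Sum.inl v) ↔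
      (if σ u = true then v = u ∨ H.Adj v u else ¬(v = u ∨ H.Adj v u)) := Iff.rfl

lemma iim_not_adj_inr_inr {u v : W} :
    ¬ (iimStep H σ).Adj (Sum.inr u) (Sum.inr v) := fun h => h

lemma iim_clique_inl {A : Set W} (hA : H.IsClique A) :
    (iimStep H σ).IsClique (Sum.inl '' A) := by
  rintro _ ⟨u, hu, rfl⟩ _ ⟨v, hv, rfl⟩ hne
  exact hA hu hv (fun h => hne (congrArg _ h))

lemma iim_clique_clone {A : Set W} (hA : H.IsClique A) {v : W} (hv : v ∈ A)
    (sv : σ v = true) :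
    (iimStep H σ).IsClique (insert (Sum.inr v) (Sum.inl '' A)) := by
  have key : ∀ u ∈ A, (iimStep H σ).Adj (Sum.inl u) (Sum.inr v) := by
    intro u hu
    rw [iim_adj_inl_inr, if_pos sv]
    rcases eq_or_ne u v with rfl | h
    · exact Or.inl rfl
    · exact Or.inr (hA hu hv h)
  rintro x (rfl | ⟨u, hu, rfl⟩) y (rfl | ⟨u', hu', rfl⟩) hne
  · exact absurd rfl hne
  · exact (iimStep H σ).adj_symm (key u' hu')
  · exact key u hu
  · exact hA hu hu' (fun h => hne (congrArg _ h))

lemma iim_clique_anticlone {B : Set W} (hB : H.IsClique B) {v : W} (hvB : v ∉ B)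
    (hn : ∀ u ∈ B, ¬ H.Adj v u) (sv : σ v = false) :
    (iimStep H σ).IsClique (insert (Sum.inr v) (Sum.inl '' B)) := by
  have key : ∀ u ∈ B, (iimStep H σ).Adj (Sum.inl u) (Sum.inr v) := by
    intro u hu
    rw [iim_adj_inl_inr, if_neg (by simp [sv])]
    rintro (rfl | h)
    · exact hvB hu
    · exact hn u hu h.symm
  rintro x (rfl | ⟨u, hu, rfl⟩) y (rfl | ⟨u', hu', rfl⟩) hne
  · exact absurd rfl hne
  · exact (iimStep H σ).adj_symm (key u' hu')
  · exact key u hu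
  · exact hB hu hu' (fun h => hne (congrArg _ h))

lemma clone_not_adj {v u : W} (sv : σ v = true) (h1 : u ≠ v) (h2 : ¬ H.Adj u v) :
    ¬ (iimStep H σ).Adj (Sum.inr v) (Sum.inl u) := by
  rw [iim_adj_inr_inl, if_pos sv]
  rintro (rfl | h)
  · exact h1 rfl
  · exact h2 h

lemma not_adj_inl_inr_clone {v u : W} (sv : σ v = true) (h1 : u ≠ v) (h2 : ¬ H.Adj u v) :
    ¬ (iimStep H σ).Adj (Sum.inl u) (Sum.inr v) :=
  fun h => clone_not_adj sv h1 h2 h.symm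

lemma not_adj_inl_inr_anticlone {v u : W} (sv : σ v = false) (h : u = v ∨ H.Adj u v) :
    ¬ (iimStep H σ).Adj (Sum.inl u) (Sum.inr v) := by
  rw [iim_adj_inl_inr, if_neg (by simp [sv])]
  exact fun h' => h' h

lemma ncard_insert_inr [Fintype W] {A : Set W} {v : W} :
    (insert (Sum.inr v) (Sum.inl '' A) : Set (W ⊕ W)).ncard = A.ncard + 1 := by
  rw [Set.ncard_insert_of_notMem (by simp) (A.toFinite.image _),
    Set.ncard_image_of_injective _ Sum.inl_injective]

lemma disj_inl_inl {A B : Set W} (h : Disjoint A B) :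
    Disjoint (Sum.inl '' A : Set (W ⊕ W)) (Sum.inl '' B) :=
  (Set.disjoint_image_iff Sum.inl_injective).mpr h

lemma disj_insert_left {A B : Set W} (h : Disjoint A B) (v : W) :
    Disjoint (insert (Sum.inr v) (Sum.inl '' A) : Set (W ⊕ W)) (Sum.inl '' B) := by
  rw [Set.disjoint_left]
  rintro _ (rfl | ⟨u, hu, rfl⟩) ⟨u', hu', h'⟩
  · exact Sum.inl_ne_inr h'
  · cases Sum.inl_injective h'
    exact Set.disjoint_left.mp h hu hu' 

lemma disj_insert_right {A B : Set W} (h : Disjoint A B) (v : W) :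
    Disjoint (Sum.inl '' A : Set (W ⊕ W)) (insert (Sum.inr v) (Sum.inl '' B)) :=
  (disj_insert_left h.symm v).symm

lemma disj_insert_insert {A B : Set W} (h : Disjoint A B) {v w : W} (hvw : v ≠ w) :
    Disjoint (insert (Sum.inr v) (Sum.inl '' A) : Set (W ⊕ W))
      (insert (Sum.inr w) (Sum.inl '' B)) := by
  rw [Set.disjoint_left]
  rintro _ (rfl | ⟨u, hu, rfl⟩) hy
  · rcases hy with h' | ⟨u', hu', h'⟩
    · exact hvw (Sum.inr_injective h')
    · exact Sum.inl_ne_inr h'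
  · rcases hy with h' | ⟨u', hu', h'⟩
    · exact Sum.inl_ne_inr h'
    · cases Sum.inl_injective h'
      exact Set.disjoint_left.mp h hu hu' 

lemma nonAdjTriple_rot {W' : Type} {H' : SimpleGraph W'} {A B C : Set W'}
    (h : NonAdjTriple H' A B C) : NonAdjTriple H' C A B :=
  ⟨h.2.2, h.1, h.2.1⟩

lemma helper_clone [Fintype W] {A B C : Set W} {v w x : W}
    (hA : H.IsClique A) (hB : H.IsClique B) (hC : H.IsClique C)
    (dAB : Disjoint A B) (dBC : Disjoint B C) (dAC : Disjoint A C)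
    (hv : v ∈ A) (hw : w ∈ B) (hx : x ∈ C)
    (nv : ∀ u ∈ B, ¬ H.Adj v u) (nw : ∀ u ∈ C, ¬ H.Adj w u) (nx : ∀ u ∈ A, ¬ H.Adj x u)
    (sv : σ v = true) (sw : σ w = true) :
    ∃ B₁ B₂ B₃ : Set (W ⊕ W),
      (Disjoint B₁ B₂ ∧ Disjoint B₂ B₃ ∧ Disjoint B₁ B₃) ∧
      (Sum.inl '' A ⊆ B₁ ∧ Sum.inl '' B ⊆ B₂ ∧ Sum.inl '' C ⊆ B₃) ∧
      ((iimStep H σ).IsClique B₁ ∧ (iimStep H σ).IsClique B₂ ∧ (iimStep H σ).IsClique B₃) ∧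
      (B₁.ncard = A.ncard + 1 ∧ B₂.ncard = B.ncard + 1) ∧
      NonAdjTriple (iimStep H σ) B₁ B₂ B₃ := by
  have hvw : v ≠ w := fun h => Set.disjoint_left.mp dAB hv (h ▸ hw)
  refine ⟨insert (Sum.inr v) (Sum.inl '' A), insert (Sum.inr w) (Sum.inl '' B),
    Sum.inl '' C,
    ⟨disj_insert_insert dAB hvw, disj_insert_left dBC w, disj_insert_left dAC v⟩,
    ⟨Set.subset_insert _ _, Set.subset_insert _ _, subset_rfl⟩,
    ⟨iim_clique_clone hA hv sv, iim_clique_clone hB hw sw, iim_clique_inl hC⟩,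
    ⟨ncard_insert_inr, ncard_insert_inr⟩, ?_, ?_, ?_⟩
  · refine ⟨Sum.inr v, Set.mem_insert _ _, ?_⟩
    rintro _ (rfl | ⟨u, hu, rfl⟩)
    · exact iim_not_adj_inr_inr
    · exact clone_not_adj sv (fun h => Set.disjoint_left.mp dAB hv (h ▸ hu))
        (fun h => nv u hu h.symm)
  · refine ⟨Sum.inr w, Set.mem_insert _ _, ?_⟩
    rintro _ ⟨u, hu, rfl⟩
    exact clone_not_adj sw (fun h => Set.disjoint_left.mp dBC hw (h ▸ hu))
      (fun h => nw u hu h.symm)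
  · refine ⟨Sum.inl x, ⟨x, hx, rfl⟩, ?_⟩
    rintro _ (rfl | ⟨u, hu, rfl⟩)
    · exact not_adj_inl_inr_clone sv
        (fun h => Set.disjoint_left.mp dAC hv (h ▸ hx)) (nx v hv)
    · exact fun h => nx u hu h

lemma helper_anti [Fintype W] {A B C : Set W} {v w x : W}
    (hA : H.IsClique A) (hB : H.IsClique B) (hC : H.IsClique C)
    (dAB : Disjoint A B) (dBC : Disjoint B C) (dAC : Disjoint A C)
    (hv : v ∈ A) (hw : w ∈ B) (hx : x ∈ C)
    (nv : ∀ u ∈ B, ¬ H.Adj v u) (nw : ∀ u ∈ C, ¬ H.Adj w u) (nx : ∀ u ∈ A, ¬ H.Adj x u)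
    (sv : σ v = false) (sw : σ w = false) :
    ∃ B₁ B₂ B₃ : Set (W ⊕ W),
      (Disjoint B₁ B₂ ∧ Disjoint B₂ B₃ ∧ Disjoint B₁ B₃) ∧
      (Sum.inl '' A ⊆ B₁ ∧ Sum.inl '' B ⊆ B₂ ∧ Sum.inl '' C ⊆ B₃) ∧
      ((iimStep H σ).IsClique B₁ ∧ (iimStep H σ).IsClique B₂ ∧ (iimStep H σ).IsClique B₃) ∧
      (B₂.ncard = B.ncard + 1 ∧ B₃.ncard = C.ncard + 1) ∧
      NonAdjTriple (iimStep H σ) B₁ B₂ B₃ := by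
  have hvw : v ≠ w := fun h => Set.disjoint_left.mp dAB hv (h ▸ hw)
  refine ⟨Sum.inl '' A, insert (Sum.inr v) (Sum.inl '' B),
    insert (Sum.inr w) (Sum.inl '' C),
    ⟨disj_insert_right dAB v, disj_insert_insert dBC hvw, disj_insert_right dAC w⟩,
    ⟨subset_rfl, Set.subset_insert _ _, Set.subset_insert _ _⟩,
    ⟨iim_clique_inl hA,
      iim_clique_anticlone hB (Set.disjoint_left.mp dAB hv) nv sv,
      iim_clique_anticlone hC (Set.disjoint_left.mp dBC hw) nw sw⟩,
    ⟨ncard_insert_inr, ncard_insert_inr⟩, ?_, ?_, ?_⟩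
  · refine ⟨Sum.inl v, ⟨v, hv, rfl⟩, ?_⟩
    rintro _ (rfl | ⟨u, hu, rfl⟩)
    · exact not_adj_inl_inr_anticlone sv (Or.inl rfl)
    · exact fun h => nv u hu h
  · refine ⟨Sum.inl w, Set.mem_insert_of_mem _ ⟨w, hw, rfl⟩, ?_⟩
    rintro _ (rfl | ⟨u, hu, rfl⟩)
    · exact not_adj_inl_inr_anticlone sw (Or.inl rfl)
    · exact fun h => nw u hu h
  · refine ⟨Sum.inl x, Set.mem_insert_of_mem _ ⟨x, hx, rfl⟩, ?_⟩
    rintro _ ⟨u, hu, rfl⟩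
    exact fun h => nx u hu h

end IIMHelpers

/-- If a finite graph `H` contains a non-adjacent triple of cliques
`A₁, A₂, A₃`, then after any single IIM step (any choice of cloning/anticloning each
vertex) there are pairwise disjoint sets `B₁, B₂, B₃` with `Aᵢ ⊆ Bᵢ`, each `Bᵢ` a
clique, `|Bᵢ| = |Aᵢ| + 1` for at least two indices, and `B₁, B₂, B₃` forming a
non-adjacent triple in some cyclic order. -/
theorem stmt12 {W : Type} [Fintype W] (H : SimpleGraph W)
    (A₁ A₂ A₃ : Set W)
    (hdisj : Disjoint A₁ A₂ ∧ Disjoint A₂ A₃ ∧ Disjoint A₁ A₃)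
    (hclique : H.IsClique A₁ ∧ H.IsClique A₂ ∧ H.IsClique A₃)
    (htriple : NonAdjTriple H A₁ A₂ A₃)
    (σ : W → Bool) :
    ∃ B₁ B₂ B₃ : Set (W ⊕ W),
      (Disjoint B₁ B₂ ∧ Disjoint B₂ B₃ ∧ Disjoint B₁ B₃) ∧
      (Sum.inl '' A₁ ⊆ B₁ ∧ Sum.inl '' A₂ ⊆ B₂ ∧ Sum.inl '' A₃ ⊆ B₃) ∧
      ((iimStep H σ).IsClique B₁ ∧ (iimStep H σ).IsClique B₂ ∧ (iimStep H σ).IsClique B₃) ∧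
      ((B₁.ncard = A₁.ncard + 1 ∧ B₂.ncard = A₂.ncard + 1) ∨
       (B₂.ncard = A₂.ncard + 1 ∧ B₃.ncard = A₃.ncard + 1) ∨
       (B₁.ncard = A₁.ncard + 1 ∧ B₃.ncard = A₃.ncard + 1)) ∧
      (NonAdjTriple (iimStep H σ) B₁ B₂ B₃ ∨ NonAdjTriple (iimStep H σ) B₃ B₂ B₁) := by
  obtain ⟨d12, d23, d13⟩ := hdisj
  obtain ⟨c1, c2, c3⟩ := hclique
  obtain ⟨⟨v₁, hv₁, n12⟩, ⟨v₂, hv₂, n23⟩, ⟨v₃, hv₃, n31⟩⟩ := htriple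
  cases h1 : σ v₁ <;> cases h2 : σ v₂ <;> cases h3 : σ v₃
  · -- fff : anticlones of v₁, v₂
    obtain ⟨B₁, B₂, B₃, D, S, K, ⟨N1, N2⟩, T⟩ :=
      helper_anti c1 c2 c3 d12 d23 d13 hv₁ hv₂ hv₃ n12 n23 n31 h1 h2
    exact ⟨B₁, B₂, B₃, D, S, K, Or.inr (Or.inl ⟨N1, N2⟩), Or.inl T⟩
  · -- fft : anticlones of v₁, v₂
    obtain ⟨B₁, B₂, B₃, D, S, K, ⟨N1, N2⟩, T⟩ :=
      helper_anti c1 c2 c3 d12 d23 d13 hv₁ hv₂ hv₃ n12 n23 n31 h1 h2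
    exact ⟨B₁, B₂, B₃, D, S, K, Or.inr (Or.inl ⟨N1, N2⟩), Or.inl T⟩
  · -- ftf : anticlones of v₃, v₁ ; roles (A₃, A₁, A₂)
    obtain ⟨B₁', B₂', B₃', ⟨D1, D2, D3⟩, ⟨S1, S2, S3⟩, ⟨K1, K2, K3⟩, ⟨N1, N2⟩, T⟩ :=
      helper_anti c3 c1 c2 d13.symm d12 d23.symm hv₃ hv₁ hv₂ n31 n12 n23 h3 h1
    exact ⟨B₂', B₃', B₁', ⟨D2, D3.symm, D1.symm⟩, ⟨S2, S3, S1⟩, ⟨K2, K3, K1⟩,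
      Or.inl ⟨N1, N2⟩, Or.inl (nonAdjTriple_rot (nonAdjTriple_rot T))⟩
  · -- ftt : clones of v₂, v₃ ; roles (A₂, A₃, A₁)
    obtain ⟨B₁', B₂', B₃', ⟨D1, D2, D3⟩, ⟨S1, S2, S3⟩, ⟨K1, K2, K3⟩, ⟨N1, N2⟩, T⟩ :=
      helper_clone c2 c3 c1 d23 d13.symm d12.symm hv₂ hv₃ hv₁ n23 n31 n12 h2 h3
    exact ⟨B₃', B₁', B₂', ⟨D3.symm, D1, D2.symm⟩, ⟨S3, S1, S2⟩, ⟨K3, K1, K2⟩,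
      Or.inr (Or.inl ⟨N1, N2⟩), Or.inl (nonAdjTriple_rot T)⟩
  · -- tff : anticlones of v₂, v₃ ; roles (A₂, A₃, A₁)
    obtain ⟨B₁', B₂', B₃', ⟨D1, D2, D3⟩, ⟨S1, S2, S3⟩, ⟨K1, K2, K3⟩, ⟨N1, N2⟩, T⟩ :=
      helper_anti c2 c3 c1 d23 d13.symm d12.symm hv₂ hv₃ hv₁ n23 n31 n12 h2 h3
    exact ⟨B₃', B₁', B₂', ⟨D3.symm, D1, D2.symm⟩, ⟨S3, S1, S2⟩, ⟨K3, K1, K2⟩,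
      Or.inr (Or.inr ⟨N2, N1⟩), Or.inl (nonAdjTriple_rot T)⟩
  · -- tft : clones of v₃, v₁ ; roles (A₃, A₁, A₂)
    obtain ⟨B₁', B₂', B₃', ⟨D1, D2, D3⟩, ⟨S1, S2, S3⟩, ⟨K1, K2, K3⟩, ⟨N1, N2⟩, T⟩ :=
      helper_clone c3 c1 c2 d13.symm d12 d23.symm hv₃ hv₁ hv₂ n31 n12 n23 h3 h1
    exact ⟨B₂', B₃', B₁', ⟨D2, D3.symm, D1.symm⟩, ⟨S2, S3, S1⟩, ⟨K2, K3, K1⟩,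
      Or.inr (Or.inr ⟨N2, N1⟩), Or.inl (nonAdjTriple_rot (nonAdjTriple_rot T))⟩
  · -- ttf : clones of v₁, v₂
    obtain ⟨B₁, B₂, B₃, D, S, K, ⟨N1, N2⟩, T⟩ :=
      helper_clone c1 c2 c3 d12 d23 d13 hv₁ hv₂ hv₃ n12 n23 n31 h1 h2
    exact ⟨B₁, B₂, B₃, D, S, K, Or.inl ⟨N1, N2⟩, Or.inl T⟩
  · -- ttt : clones of v₁, v₂
    obtain ⟨B₁, B₂, B₃, D, S, K, ⟨N1, N2⟩, T⟩ :=
      helper_clone c1 c2 c3 d12 d23 d13 hv₁ hv₂ hv₃ n12 n23 n31 h1 h2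
    exact ⟨B₁, B₂, B₃, D, S, K, Or.inl ⟨N1, N2⟩, Or.inl T⟩
end

section
/- Let G be a finite simple graph, k ∈ ℕ, H ∈ IIM_k(G), and l < k, and let H_l and H_{l+1} denote the induced subgraphs of H on levels 0 through l and 0 through l+1, respectively. Fix a proper coloring of H_l using exactly c colors under which at least two distinct vertices of H_l each have both a rainbow neighborhood and a rainbow anti-neighborhood. Then: (1) every proper coloring of H_{l+1} whose restriction to V(H_l) equals the fixed coloring uses at least c + 1 colors; and (2) if such a proper coloring of H_{l+1} uses exactly c + 1 colors, then under it at least two distinct vertices of H_{l+1} each have both a rainbow neighborhood and a rainbow anti-neighborhood (with respect to the c + 1 colors). -/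
/-- A proper coloring: adjacent vertices get distinct colors. -/
def ProperColoring {W : Type} (H : SimpleGraph W) (f : W → ℕ) : Prop :=
  ∀ ⦃u v : W⦄, H.Adj u v → f u ≠ f v

/-- `v` has a rainbow neighborhood: every used color appears on some vertex of the
closed neighborhood `N[v]`. -/
def RainbowNbhd {W : Type} (H : SimpleGraph W) (f : W → ℕ) (v : W) : Prop :=
  ∀ c ∈ Set.range f, ∃ u : W, (u = v ∨ H.Adj u v) ∧ f u = c

/-- `v` has a rainbow anti-neighborhood: every used color appears on some vertex
outside the closed neighborhood `N[v]`. -/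
def RainbowAntiNbhd {W : Type} (H : SimpleGraph W) (f : W → ℕ) (v : W) : Prop :=
  ∀ c ∈ Set.range f, ∃ u : W, ¬ (u = v ∨ H.Adj u v) ∧ f u = c

/-- Let `H ∈ IIM_k(G)`, `l < k`, and write `H_l`, `H_{l+1}` for the
induced subgraphs on levels `0 … l` and `0 … l+1` (i.e. the IIM graphs after `l` and
`l + 1` steps).  Fix a proper coloring of `H_l` with exactly `c` colors having a
rainbow pair.  Then (1) every proper coloring of `H_{l+1}` extending it uses at least
`c + 1` colors, and (2) if it uses exactly `c + 1` colors it again has a rainbow pair. -/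
theorem stmt16 {V : Type} [Fintype V] (G : SimpleGraph V)
    (k l : ℕ) (hlk : l < k) (σ : ∀ i, IterV V i → Bool)
    (c : ℕ) (f : IterV V l → ℕ)
    (hf : ProperColoring (iimGraph G σ l) f)
    (hc : (Set.range f).ncard = c)
    (hpair : ∃ v w : IterV V l, v ≠ w ∧
      RainbowNbhd (iimGraph G σ l) f v ∧ RainbowAntiNbhd (iimGraph G σ l) f v ∧
      RainbowNbhd (iimGraph G σ l) f w ∧ RainbowAntiNbhd (iimGraph G σ l) f w)
    (g : IterV V (l + 1) → ℕ)
    (hg : ProperColoring (iimGraph G σ (l + 1)) g)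
    (hext : ∀ x : IterV V l, g (Sum.inl x) = f x) :
    c + 1 ≤ (Set.range g).ncard ∧
    ((Set.range g).ncard = c + 1 →
      ∃ v w : IterV V (l + 1), v ≠ w ∧
        RainbowNbhd (iimGraph G σ (l + 1)) g v ∧
          RainbowAntiNbhd (iimGraph G σ (l + 1)) g v ∧
        RainbowNbhd (iimGraph G σ (l + 1)) g w ∧
          RainbowAntiNbhd (iimGraph G σ (l + 1)) g w) := by
  obtain ⟨v, w, hvw, hvN, hvA, hwN, hwA⟩ := hpair
  set H := iimGraph G σ l with hH
  set τ := σ l with hτ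
  have hfin_f : (Set.range f).Finite := Set.finite_range f
  have hfin_g : (Set.range g).Finite := Set.finite_range g
  have hsub : Set.range f ⊆ Set.range g := by
    rintro e ⟨x, rfl⟩; exact ⟨Sum.inl x, hext x⟩
  -- the new copy of a vertex with a rainbow pair gets a fresh color
  have hnew : ∀ u : IterV V l, RainbowNbhd H f u → RainbowAntiNbhd H f u →
      g (Sum.inr u) ∉ Set.range f := by
    rintro u hN hA ⟨x, hx⟩
    cases hb : τ u with
    | true =>
      obtain ⟨a, ha, hfa⟩ := hN (f x) ⟨x, rfl⟩
      have hadj : (iimStep H τ).Adj (Sum.inl a) (Sum.inr u) := by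
        show if τ u = true then a = u ∨ H.Adj a u else ¬(a = u ∨ H.Adj a u)
        rw [if_pos hb]; exact ha
      exact hg hadj (by rw [hext a, hfa]; exact hx)
    | false =>
      obtain ⟨a, ha, hfa⟩ := hA (f x) ⟨x, rfl⟩
      have hadj : (iimStep H τ).Adj (Sum.inl a) (Sum.inr u) := by
        show if τ u = true then a = u ∨ H.Adj a u else ¬(a = u ∨ H.Adj a u)
        rw [if_neg (by simp [hb])]; exact ha
      exact hg hadj (by rw [hext a, hfa]; exact hx)
  have hdnotf : g (Sum.inr v) ∉ Set.range f := hnew v hvN hvA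
  have hssub : Set.range f ⊂ Set.range g :=
    ⟨hsub, fun h => hdnotf (h ⟨Sum.inr v, rfl⟩)⟩
  have hlt : (Set.range f).ncard < (Set.range g).ncard :=
    Set.ncard_lt_ncard hssub hfin_g
  refine ⟨by omega, ?_⟩
  intro hcard
  set d := g (Sum.inr v) with hd
  have hsub2 : insert d (Set.range f) ⊆ Set.range g := by
    rintro e he
    rcases Set.mem_insert_iff.mp he with rfl | hef
    · exact ⟨Sum.inr v, rfl⟩
    · exact hsub hef
  have hins : (insert d (Set.range f)).ncard = c + 1 := by
    rw [Set.ncard_insert_of_notMem hdnotf hfin_f, hc]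
  have hrange : Set.range g = insert d (Set.range f) :=
    (Set.eq_of_subset_of_ncard_le hsub2 (by omega) hfin_g).symm
  have hwd : g (Sum.inr w) = d := by
    have hmem : g (Sum.inr w) ∈ Set.range g := ⟨Sum.inr w, rfl⟩
    rw [hrange] at hmem
    rcases Set.mem_insert_iff.mp hmem with h | h
    · exact h
    · exact absurd h (hnew w hwN hwA)
  have key : ∀ u u' : IterV V l, u ≠ u' →
      RainbowNbhd H f u → RainbowAntiNbhd H f u →
      g (Sum.inr u) = d → g (Sum.inr u') = d →
      RainbowNbhd (iimStep H τ) g (Sum.inr u) ∧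
      RainbowAntiNbhd (iimStep H τ) g (Sum.inr u) := by
    intro u u' huu' hN hA hud hu'd
    constructor
    · intro e he
      replace he : e ∈ insert d (Set.range f) := by rw [← hrange]; exact he
      rcases Set.mem_insert_iff.mp he with rfl | ⟨x, rfl⟩
      · exact ⟨Sum.inr u, Or.inl rfl, hud⟩
      · cases hb : τ u with
        | true =>
          obtain ⟨a, ha, hfa⟩ := hN (f x) ⟨x, rfl⟩
          refine ⟨Sum.inl a, Or.inr ?_, by rw [hext a]; exact hfa⟩
          show if τ u = true then a = u ∨ H.Adj a u else ¬(a = u ∨ H.Adj a u)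
          rw [if_pos hb]; exact ha
        | false =>
          obtain ⟨a, ha, hfa⟩ := hA (f x) ⟨x, rfl⟩
          refine ⟨Sum.inl a, Or.inr ?_, by rw [hext a]; exact hfa⟩
          show if τ u = true then a = u ∨ H.Adj a u else ¬(a = u ∨ H.Adj a u)
          rw [if_neg (by simp [hb])]; exact ha
    · intro e he
      replace he : e ∈ insert d (Set.range f) := by rw [← hrange]; exact he
      rcases Set.mem_insert_iff.mp he with rfl | ⟨x, rfl⟩
      · refine ⟨Sum.inr u', ?_, hu'd⟩
        rintro (h | h)
        · exact huu' (Sum.inr.inj h).symm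
        · exact h
      · cases hb : τ u with
        | true =>
          obtain ⟨a, ha, hfa⟩ := hA (f x) ⟨x, rfl⟩
          refine ⟨Sum.inl a, ?_, by rw [hext a]; exact hfa⟩
          rintro (h | h)
          · exact Sum.inl_ne_inr h
          · apply ha
            have h' : if τ u = true then a = u ∨ H.Adj a u
                else ¬(a = u ∨ H.Adj a u) := h
            rwa [if_pos hb] at h'
        | false =>
          obtain ⟨a, ha, hfa⟩ := hN (f x) ⟨x, rfl⟩
          refine ⟨Sum.inl a, ?_, by rw [hext a]; exact hfa⟩
          rintro (h | h)
          · exact Sum.inl_ne_inr h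
          · have h' : if τ u = true then a = u ∨ H.Adj a u
                else ¬(a = u ∨ H.Adj a u) := h
            rw [if_neg (by simp [hb])] at h'
            exact h' ha
  obtain ⟨hv1, hv2⟩ := key v w hvw hvN hvA rfl hwd
  obtain ⟨hw1, hw2⟩ := key w v hvw.symm hwN hwA hwd rfl
  exact ⟨Sum.inr v, Sum.inr w, fun h => hvw (Sum.inr.inj h), hv1, hv2, hw1, hw2⟩
end
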